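/- In any optimal WSPT schedule for an instance of Pm||∑w_jC_j with maximum processing time p_max and maximum weight w_max, the deviation Δ_{i,ℓ} of the load of jobs with efficiency at least e_(i) on machine ℓ from the average load μ_i of such jobs satisfies |Δ_{i,ℓ}| ≤ √(m·w_max)·p_max², for every efficiency index i and machine ℓ. -/

import Mathlib

set_option maxHeartbeats 1000000


/-- Total processing time of jobs with efficiency at least `t` assigned to machine `ℓ`
by the assignment `σ` (in a WSPT schedule the job order on each machine is by
non-increasing efficiency, so the assignment determines the schedule). -/
def mLoad {n m : ℕ} (p w : Fin n → ℕ) (σ : Fin n → Fin m) (t : ℚ) (ℓ : Fin m) : ℚ :=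
  ∑ j ∈ Finset.univ.filter (fun j => t ≤ (w j : ℚ) / (p j : ℚ) ∧ σ j = ℓ), (p j : ℚ)

/-- Total processing time of all jobs with efficiency at least `t`. -/
def totLoad {n : ℕ} (p w : Fin n → ℕ) (t : ℚ) : ℚ :=
  ∑ j ∈ Finset.univ.filter (fun j => t ≤ (w j : ℚ) / (p j : ℚ)), (p j : ℚ)

/-- The deviation `Δ_{i,ℓ} = μ_i − P(J₁^ℓ ∪ ⋯ ∪ J_i^ℓ)` at efficiency threshold `t`. -/
def dev {n m : ℕ} (p w : Fin n → ℕ) (σ : Fin n → Fin m) (t : ℚ) (ℓ : Fin m) : ℚ :=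
  totLoad p w t / m - mLoad p w σ t ℓ

/-- Goemans–Williamson expression for the total weighted completion time of the
WSPT schedule determined by the assignment `σ`, where `e 0 > e 1 > ⋯ > e (k-1)` are
the distinct efficiencies and `e k = 0`. -/
def fObj {n m : ℕ} (p w : Fin n → ℕ) (e : ℕ → ℚ) (k : ℕ) (σ : Fin n → Fin m) : ℚ :=
  (∑ i ∈ Finset.range k, (e i - e (i + 1)) * ∑ ℓ : Fin m, (mLoad p w σ (e i) ℓ) ^ 2
    + ∑ j : Fin n, (w j : ℚ) * (p j : ℚ)) / 2

/-- The function `g(σ) = ∑_i (e_(i) − e_(i+1)) ∑_ℓ Δ_{i,ℓ}²`. -/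
def gObj {n m : ℕ} (p w : Fin n → ℕ) (e : ℕ → ℚ) (k : ℕ) (σ : Fin n → Fin m) : ℚ :=
  ∑ i ∈ Finset.range k, (e i - e (i + 1)) * ∑ ℓ : Fin m, (dev p w σ (e i) ℓ) ^ 2

lemma sum_mLoad {n m : ℕ} (p w : Fin n → ℕ) (σ : Fin n → Fin m) (t : ℚ) :
    ∑ ℓ : Fin m, mLoad p w σ t ℓ = totLoad p w t := by
  unfold mLoad totLoad
  rw [← Finset.sum_fiberwise (Finset.univ.filter (fun j => t ≤ (w j : ℚ) / (p j : ℚ))) σ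
    (fun j => (p j : ℚ))]
  refine Finset.sum_congr rfl fun ℓ _ => ?_
  refine Finset.sum_congr ?_ fun _ _ => rfl
  rw [Finset.filter_filter]

lemma sum_dev_zero {n m : ℕ} (hm : 0 < m) (p w : Fin n → ℕ) (σ : Fin n → Fin m) (t : ℚ) :
    ∑ ℓ : Fin m, dev p w σ t ℓ = 0 := by
  have hm' : (m : ℚ) ≠ 0 := Nat.cast_ne_zero.mpr hm.ne'
  simp only [dev, Finset.sum_sub_distrib, sum_mLoad, Finset.sum_const, Finset.card_univ,
    Fintype.card_fin, nsmul_eq_mul]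
  field_simp
  ring

lemma sum_mLoad_sq {n m : ℕ} (hm : 0 < m) (p w : Fin n → ℕ) (σ : Fin n → Fin m) (t : ℚ) :
    ∑ ℓ : Fin m, (mLoad p w σ t ℓ) ^ 2
      = m * (totLoad p w t / m) ^ 2 + ∑ ℓ : Fin m, (dev p w σ t ℓ) ^ 2 := by
  have h1 : ∀ ℓ : Fin m, mLoad p w σ t ℓ = totLoad p w t / m - dev p w σ t ℓ := by
    intro ℓ; simp [dev]
  have h2 := sum_dev_zero hm p w σ t
  calc ∑ ℓ : Fin m, (mLoad p w σ t ℓ) ^ 2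
      = ∑ ℓ : Fin m, ((totLoad p w t / m) ^ 2
          - 2 * (totLoad p w t / m) * dev p w σ t ℓ + (dev p w σ t ℓ) ^ 2) := by
        refine Finset.sum_congr rfl fun ℓ _ => ?_; rw [h1 ℓ]; ring
    _ = m * (totLoad p w t / m) ^ 2 + ∑ ℓ : Fin m, (dev p w σ t ℓ) ^ 2 := by
        simp only [Finset.sum_add_distrib, Finset.sum_sub_distrib, ← Finset.mul_sum, h2,
          Finset.sum_const, Finset.card_univ, Fintype.card_fin, nsmul_eq_mul]
        ring

lemma fObj_eq_gObj {n m : ℕ} (hm : 0 < m) (p w : Fin n → ℕ) (e : ℕ → ℚ) (k : ℕ)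
    (σ : Fin n → Fin m) :
    fObj p w e k σ = (∑ i ∈ Finset.range k, (e i - e (i + 1)) * (m * (totLoad p w (e i) / m) ^ 2)
      + ∑ j : Fin n, (w j : ℚ) * (p j : ℚ) + gObj p w e k σ) / 2 := by
  unfold fObj gObj
  rw [Finset.sum_congr rfl (fun i _ => by rw [sum_mLoad_sq hm p w σ (e i)])]
  rw [Finset.sum_congr rfl (fun i (_ : i ∈ Finset.range k) => mul_add (e i - e (i+1)) _ _),
    Finset.sum_add_distrib]
  ring

lemma gObj_min {n m : ℕ} (hm : 0 < m) (p w : Fin n → ℕ) (e : ℕ → ℚ) (k : ℕ)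
    (σ τ : Fin n → Fin m) (hopt : fObj p w e k σ ≤ fObj p w e k τ) :
    gObj p w e k σ ≤ gObj p w e k τ := by
  rw [fObj_eq_gObj hm, fObj_eq_gObj hm] at hopt
  linarith

lemma greedy_exists {n m : ℕ} (hm : 0 < m) (pmax : ℕ) (p : Fin n → ℕ)
    (hpmax : ∀ j, (p j : ℚ) ≤ pmax) :
    ∀ (L : List (Fin n)), L.Nodup → ∀ (base : Fin m → ℚ),
      (∀ a b : Fin m, base a ≤ base b + pmax) →
      ∃ τ : Fin n → Fin m, ∀ s : ℕ, ∀ a b : Fin m,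
        base a + ((L.take s).map (fun j => if τ j = a then (p j : ℚ) else 0)).sum
          ≤ base b + ((L.take s).map (fun j => if τ j = b then (p j : ℚ) else 0)).sum + pmax := by
  intro L
  induction L with
  | nil =>
    intro _ base hbase
    exact ⟨fun _ => ⟨0, hm⟩, fun s a b => by simpa using hbase a b⟩
  | cons j rest ih =>
    intro hnd base hbase
    obtain ⟨c, -, hc⟩ := Finset.exists_min_image Finset.univ base ⟨⟨0, hm⟩, Finset.mem_univ _⟩
    have hc' : ∀ b : Fin m, base c ≤ base b := fun b => hc b (Finset.mem_univ b)
    set base' : Fin m → ℚ := fun ℓ => base ℓ + if ℓ = c then (p j : ℚ) else 0 with hbase'def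
    have hpj : (p j : ℚ) ≤ pmax := hpmax j
    have hpj0 : (0:ℚ) ≤ (p j : ℚ) := by positivity
    have hpm0 : (0:ℚ) ≤ (pmax : ℚ) := by positivity
    have hbase' : ∀ a b : Fin m, base' a ≤ base' b + pmax := by
      intro a b
      simp only [hbase'def]
      by_cases ha : a = c
      · by_cases hb : b = c
        · rw [if_pos ha, if_pos hb, ha, hb]; linarith
        · rw [if_pos ha, if_neg hb, ha]; linarith [hc' b]
      · by_cases hb : b = c
        · rw [if_neg ha, if_pos hb]; linarith [hbase a b]
        · rw [if_neg ha, if_neg hb]; linarith [hbase a b]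
    obtain ⟨τ', hτ'⟩ := ih (List.nodup_cons.mp hnd).2 base' hbase'
    have hjrest : j ∉ rest := (List.nodup_cons.mp hnd).1
    refine ⟨Function.update τ' j c, fun s a b => ?_⟩
    cases s with
    | zero => simpa using hbase a b
    | succ s =>
      simp only [List.take_succ_cons, List.map_cons, List.sum_cons]
      have hupd : ∀ x ∈ rest.take s, Function.update τ' j c x = τ' x := by
        intro x hx
        have : x ≠ j := fun h => hjrest (h ▸ List.mem_of_mem_take hx)
        exact Function.update_of_ne this _ _
      have hmap : ∀ ℓ : Fin m,
          ((rest.take s).map (fun x => if Function.update τ' j c x = ℓ then (p x : ℚ) else 0)).sum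
          = ((rest.take s).map (fun x => if τ' x = ℓ then (p x : ℚ) else 0)).sum := by
        intro ℓ
        refine congrArg List.sum (List.map_congr_left fun x hx => ?_)
        rw [hupd x hx]
      have hjc : Function.update τ' j c j = c := Function.update_self j c τ'
      rw [hjc, hmap a, hmap b]
      have swap : ∀ x : Fin m,
          (if c = x then (p j : ℚ) else 0) = (if x = c then (p j : ℚ) else 0) := by
        intro x
        by_cases h : x = c
        · rw [if_pos h.symm, if_pos h]
        · rw [if_neg (fun hh => h hh.symm), if_neg h]
      have key := hτ' s a b
      simp only [hbase'def] at key
      rw [swap a, swap b]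
      linarith [key]

lemma sorted_filter_eq_takeWhile {α : Type*} (eff : α → ℚ) (t : ℚ) :
    ∀ L : List α, L.Pairwise (fun a b => eff b ≤ eff a) →
      L.filter (fun j => decide (t ≤ eff j)) = L.takeWhile (fun j => decide (t ≤ eff j)) := by
  intro L
  induction L with
  | nil => simp
  | cons x rest ih =>
    intro hs
    rw [List.pairwise_cons] at hs
    by_cases h : t ≤ eff x
    · rw [List.filter_cons_of_pos (by simpa), List.takeWhile_cons_of_pos (by simpa), ih hs.2]
    · rw [List.filter_cons_of_neg (by simp only [decide_eq_true_eq]; exact h),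
        List.takeWhile_cons_of_neg (by simp only [decide_eq_true_eq]; exact h)]
      exact List.filter_eq_nil_iff.mpr fun a ha => by
        simp only [decide_eq_true_eq]
        exact fun hta => h (hta.trans (hs.1 a ha))

lemma balanced_exists {n m : ℕ} (hm : 0 < m) (pmax : ℕ) (p w : Fin n → ℕ)
    (hpmax : ∀ j, (p j : ℚ) ≤ pmax) :
    ∃ τ : Fin n → Fin m, ∀ t : ℚ, ∀ a b : Fin m,
      mLoad p w τ t a ≤ mLoad p w τ t b + pmax := by
  set eff : Fin n → ℚ := fun j => (w j : ℚ) / (p j : ℚ) with heff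
  set r : Fin n → Fin n → Prop := fun a b => eff b ≤ eff a with hr
  haveI : DecidableRel r := fun a b => inferInstanceAs (Decidable (eff b ≤ eff a))
  haveI : IsTotal (Fin n) r := ⟨fun a b => le_total (eff b) (eff a)⟩
  haveI : IsTrans (Fin n) r := ⟨fun a b c hab hbc => le_trans hbc hab⟩
  set L : List (Fin n) := List.insertionSort r (List.finRange n) with hL
  have hperm : L.Perm (List.finRange n) := List.perm_insertionSort r _
  have hnd : L.Nodup := hperm.symm.nodup (List.nodup_finRange n)
  have hsorted : L.Pairwise r := List.pairwise_insertionSort r _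
  have hmem : ∀ x : Fin n, x ∈ L := fun x => hperm.mem_iff.mpr (List.mem_finRange x)
  obtain ⟨τ, hτ⟩ := greedy_exists hm pmax p hpmax L hnd (fun _ => 0) (by
    intro a b; simp)
  refine ⟨τ, fun t a b => ?_⟩
  set Pb : Fin n → Bool := fun j => decide (t ≤ eff j) with hPb
  have hpref : L.takeWhile Pb <+: L := List.takeWhile_prefix Pb
  have htake : L.take (L.takeWhile Pb).length = L.takeWhile Pb :=
    (List.prefix_iff_eq_take.mp hpref).symm
  have hfilter : L.filter Pb = L.takeWhile Pb := sorted_filter_eq_takeWhile eff t L hsorted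
  have hmL : ∀ ℓ : Fin m, mLoad p w τ t ℓ
      = ((L.filter Pb).map (fun x => if τ x = ℓ then (p x : ℚ) else 0)).sum := by
    intro ℓ
    have hfin : Finset.univ.filter (fun j => t ≤ eff j) = (L.filter Pb).toFinset := by
      ext x
      simp [List.mem_filter, hmem x, hPb]
    rw [mLoad, show (Finset.univ.filter (fun j => t ≤ (w j : ℚ) / (p j : ℚ) ∧ τ j = ℓ))
        = (Finset.univ.filter (fun j => t ≤ eff j)).filter (fun j => τ j = ℓ) by
        rw [Finset.filter_filter],
      Finset.sum_filter, hfin, List.sum_toFinset _ (hnd.filter Pb)]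
  have key := hτ (L.takeWhile Pb).length a b
  rw [htake, ← hfilter] at key
  rw [hmL a, hmL b]
  simpa using key

lemma dev_bound_of_balanced {n m : ℕ} (hm : 0 < m) (pmax : ℕ) (p w : Fin n → ℕ)
    (τ : Fin n → Fin m) (t : ℚ)
    (hbal : ∀ a b : Fin m, mLoad p w τ t a ≤ mLoad p w τ t b + pmax) (ℓ : Fin m) :
    |dev p w τ t ℓ| ≤ pmax := by
  have hmQ : (0:ℚ) < m := by exact_mod_cast hm
  have h1 : totLoad p w t ≤ m * (mLoad p w τ t ℓ + pmax) := by
    rw [← sum_mLoad p w τ t]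
    calc ∑ b : Fin m, mLoad p w τ t b ≤ ∑ _b : Fin m, (mLoad p w τ t ℓ + pmax) :=
          Finset.sum_le_sum fun b _ => hbal b ℓ
      _ = m * (mLoad p w τ t ℓ + pmax) := by
          rw [Finset.sum_const, Finset.card_univ, Fintype.card_fin, nsmul_eq_mul]
  have h2 : (m:ℚ) * mLoad p w τ t ℓ ≤ totLoad p w t + m * pmax := by
    rw [← sum_mLoad p w τ t]
    calc (m:ℚ) * mLoad p w τ t ℓ = ∑ _b : Fin m, mLoad p w τ t ℓ := by
          simp [Finset.sum_const, Finset.card_univ, nsmul_eq_mul]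
      _ ≤ ∑ b : Fin m, (mLoad p w τ t b + pmax) := Finset.sum_le_sum fun b _ => hbal ℓ b
      _ = ∑ b : Fin m, mLoad p w τ t b + m * pmax := by
          simp [Finset.sum_add_distrib, Finset.sum_const, Finset.card_univ, nsmul_eq_mul]
  have hdiv1 : totLoad p w t / m ≤ mLoad p w τ t ℓ + pmax := by
    rw [div_le_iff₀ hmQ]; nlinarith
  have hdiv2 : mLoad p w τ t ℓ - pmax ≤ totLoad p w t / m := by
    rw [le_div_iff₀ hmQ]; nlinarith
  rw [dev, abs_le]
  constructor <;> linarith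

theorem stmt_9 (m k n pmax wmax : ℕ) (hm : 0 < m) (hk : 0 < k)
    (p w : Fin n → ℕ)
    (hp : ∀ j, 0 < p j) (hpmax : ∀ j, p j ≤ pmax)
    (hw : ∀ j, 0 < w j) (hwmax : ∀ j, w j ≤ wmax)
    (e : ℕ → ℚ) (hdec : ∀ i < k, e (i + 1) < e i) (hek : e k = 0)
    (hcov : ∀ j, ∃ i < k, (w j : ℚ) / (p j : ℚ) = e i)
    (hrng : ∀ i < k, ∃ j, (w j : ℚ) / (p j : ℚ) = e i)
    (σ : Fin n → Fin m)
    (hopt : ∀ τ : Fin n → Fin m, fObj p w e k σ ≤ fObj p w e k τ) :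
    ∀ i < k, ∀ ℓ : Fin m,
      |((dev p w σ (e i) ℓ : ℚ) : ℝ)| ≤ Real.sqrt (m * wmax) * (pmax : ℝ) ^ 2 := by
  intro i hi ℓ
  obtain ⟨j0, hj0⟩ := hrng 0 hk
  have hpmax1 : 1 ≤ pmax := le_trans (hp j0) (hpmax j0)
  have hpmQ : (0:ℚ) < (pmax:ℚ) := by exact_mod_cast hpmax1
  have hpmQ1 : (1:ℚ) ≤ (pmax:ℚ) := by exact_mod_cast hpmax1
  -- δ lower bound
  have hdelta : ∀ i' < k, (1:ℚ)/(pmax:ℚ)^2 ≤ e i' - e (i'+1) := by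
    intro i' hi'
    obtain ⟨a, ha⟩ := hrng i' hi'
    have hpaQ : (0:ℚ) < (p a : ℚ) := by exact_mod_cast hp a
    have hpa' : (p a : ℚ) ≤ pmax := by exact_mod_cast hpmax a
    have hwaQ : (1:ℚ) ≤ (w a : ℚ) := by exact_mod_cast hw a
    by_cases hik : i' + 1 = k
    · rw [hik, hek, sub_zero, ← ha]
      rw [div_le_div_iff₀ (by positivity) hpaQ]
      nlinarith
    · have hik' : i' + 1 < k := lt_of_le_of_ne (Nat.succ_le_of_lt hi') hik
      obtain ⟨b, hb⟩ := hrng (i'+1) hik'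
      have hpbQ : (0:ℚ) < (p b : ℚ) := by exact_mod_cast hp b
      have hpb' : (p b : ℚ) ≤ pmax := by exact_mod_cast hpmax b
      rw [← ha, ← hb]
      have hlt : (w b : ℚ)/(p b : ℚ) < (w a : ℚ)/(p a : ℚ) := by
        rw [ha, hb]; exact hdec i' hi'
      have hcross : w b * p a < w a * p b := by
        have := (div_lt_div_iff₀ hpbQ hpaQ).mp hlt
        exact_mod_cast this
      have hnum : (w b : ℚ) * p a + 1 ≤ (w a : ℚ) * p b := by exact_mod_cast hcross
      rw [div_sub_div _ _ hpaQ.ne' hpbQ.ne',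
        div_le_div_iff₀ (by positivity) (by positivity)]
      have hden : (p a : ℚ) * p b ≤ (pmax:ℚ) * pmax := by nlinarith
      nlinarith
  -- balanced schedule τ
  obtain ⟨τ, hτ⟩ := balanced_exists hm pmax p w (fun j => by exact_mod_cast hpmax j)
  have hdevτ : ∀ (t : ℚ) (ℓ' : Fin m), (dev p w τ t ℓ')^2 ≤ (pmax:ℚ)^2 := by
    intro t ℓ'
    have := dev_bound_of_balanced hm pmax p w τ t (hτ t) ℓ'
    rw [abs_le] at this
    exact sq_le_sq' this.1 this.2
  -- bound g(τ)
  have hgτ : gObj p w e k τ ≤ (wmax:ℚ) * ((m:ℚ) * (pmax:ℚ)^2) := by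
    have hsum : ∀ i' ∈ Finset.range k,
        (e i' - e (i'+1)) * ∑ ℓ' : Fin m, (dev p w τ (e i') ℓ')^2
          ≤ (e i' - e (i'+1)) * ((m:ℚ) * (pmax:ℚ)^2) := by
      intro i' hi'
      rw [Finset.mem_range] at hi'
      have hδpos : (0:ℚ) ≤ e i' - e (i'+1) := le_of_lt (sub_pos.mpr (hdec i' hi'))
      refine mul_le_mul_of_nonneg_left ?_ hδpos
      calc ∑ ℓ' : Fin m, (dev p w τ (e i') ℓ')^2 ≤ ∑ _ℓ' : Fin m, (pmax:ℚ)^2 :=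
            Finset.sum_le_sum fun ℓ' _ => hdevτ (e i') ℓ'
        _ = (m:ℚ) * (pmax:ℚ)^2 := by
            simp [Finset.sum_const, Finset.card_univ, nsmul_eq_mul]
    calc gObj p w e k τ ≤ ∑ i' ∈ Finset.range k, (e i' - e (i'+1)) * ((m:ℚ) * (pmax:ℚ)^2) :=
          Finset.sum_le_sum hsum
      _ = (e 0 - e k) * ((m:ℚ) * (pmax:ℚ)^2) := by
          rw [← Finset.sum_mul, Finset.sum_range_sub' e k]
      _ ≤ (wmax:ℚ) * ((m:ℚ) * (pmax:ℚ)^2) := by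
          refine mul_le_mul_of_nonneg_right ?_ (by positivity)
          rw [hek, sub_zero, ← hj0]
          have hwj0 : (w j0 : ℚ) ≤ wmax := by exact_mod_cast hwmax j0
          have hpj0 : (1:ℚ) ≤ (p j0 : ℚ) := by exact_mod_cast hp j0
          calc (w j0 : ℚ) / (p j0 : ℚ) ≤ (w j0 : ℚ) :=
                div_le_self (by positivity) hpj0
            _ ≤ wmax := hwj0
  have hgσ : gObj p w e k σ ≤ (wmax:ℚ) * ((m:ℚ) * (pmax:ℚ)^2) :=
    le_trans (gObj_min hm p w e k σ τ (hopt τ)) hgτ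
  -- extract the single term
  have hterm : (e i - e (i+1)) * (dev p w σ (e i) ℓ)^2 ≤ gObj p w e k σ := by
    calc (e i - e (i+1)) * (dev p w σ (e i) ℓ)^2
        ≤ (e i - e (i+1)) * ∑ ℓ' : Fin m, (dev p w σ (e i) ℓ')^2 :=
          mul_le_mul_of_nonneg_left
            (Finset.single_le_sum (f := fun ℓ' => (dev p w σ (e i) ℓ')^2)
              (fun ℓ' _ => sq_nonneg _) (Finset.mem_univ ℓ))
            (le_of_lt (sub_pos.mpr (hdec i hi)))
      _ ≤ gObj p w e k σ := by
          rw [gObj]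
          refine Finset.single_le_sum
            (f := fun i' => (e i' - e (i'+1)) * ∑ ℓ' : Fin m, (dev p w σ (e i') ℓ')^2)
            (fun i' hi' => ?_) (Finset.mem_range.mpr hi)
          rw [Finset.mem_range] at hi'
          exact mul_nonneg (le_of_lt (sub_pos.mpr (hdec i' hi')))
            (Finset.sum_nonneg fun _ _ => sq_nonneg _)
  have hsq : (dev p w σ (e i) ℓ)^2 ≤ (m:ℚ) * wmax * (pmax:ℚ)^4 := by
    set D := dev p w σ (e i) ℓ
    set δ := e i - e (i+1)
    set G := gObj p w e k σ
    have hδ : (1:ℚ)/(pmax:ℚ)^2 ≤ δ := hdelta i hi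
    have h1 : (1:ℚ) ≤ δ * pmax^2 := by
      rw [div_le_iff₀ (by positivity)] at hδ; linarith
    have h2 : δ * D^2 * pmax^2 ≤ G * pmax^2 :=
      mul_le_mul_of_nonneg_right hterm (by positivity)
    have h3 : D^2 ≤ D^2 * (δ * pmax^2) := le_mul_of_one_le_right (sq_nonneg D) h1
    nlinarith [sq_nonneg (pmax:ℚ)]
  -- pass to ℝ
  have hR : ((dev p w σ (e i) ℓ : ℚ) : ℝ)^2 ≤ (m:ℝ) * wmax * (pmax:ℝ)^4 := by
    exact_mod_cast hsq
  have h0 : (0:ℝ) ≤ (m:ℝ) * wmax := by positivity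
  rw [← Real.sqrt_sq_eq_abs]
  calc Real.sqrt (((dev p w σ (e i) ℓ : ℚ) : ℝ)^2)
      ≤ Real.sqrt ((m:ℝ) * wmax * (pmax:ℝ)^4) := Real.sqrt_le_sqrt hR
    _ = Real.sqrt ((m:ℝ) * wmax) * (pmax:ℝ)^2 := by
        rw [show (m:ℝ)*wmax*(pmax:ℝ)^4 = ((m:ℝ)*wmax) * ((pmax:ℝ)^2)^2 by ring,
          Real.sqrt_mul h0, Real.sqrt_sq (by positivity)]
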